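/- In every k-edge-coloring of K_n^r, if some color class has t components of sizes s_1,...,s_t (each s_i ≥ r, with the color class containing at least C(n,r)/k edges), then C(n − r(t−1), r) + (t−1) ≥ C(n,r)/k. Consequently, for fixed k ≥ r+1, f_k(K_n^r) ≤ n(1/r − 1/(r·k^{1/r}))(1 + o(1)) as n → ∞. -/

import Mathlib

/-- The "intersection graph on vertices" of the color class `i` of an edge
coloring `c` of the complete `r`-uniform hypergraph `K_n^r`:
two distinct vertices are adjacent iff some `r`-edge of color `i`
contains both.  Its connected components containing an edge coincide with
the components of the color class of the hypergraph. -/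
def hColorClass (r : ℕ) {n k : ℕ} (c : Finset (Fin n) → Fin k) (i : Fin k) :
    SimpleGraph (Fin n) where
  Adj u v := u ≠ v ∧ ∃ e : Finset (Fin n), e.card = r ∧ c e = i ∧ u ∈ e ∧ v ∈ e
  symm := by
    constructor
    rintro u v ⟨h1, e, h2, h3, h4, h5⟩
    exact ⟨h1.symm, e, h2, h3, h5, h4⟩
  loopless := by
    constructor
    intro u h
    exact h.1 rfl

/-- The number of connected components containing at least one edge. -/
noncomputable def numEdgeComps {n : ℕ} (G : SimpleGraph (Fin n)) : ℕ :=
  Nat.card {C : G.ConnectedComponent //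
    ∃ u v : Fin n, G.Adj u v ∧ G.connectedComponentMk u = C}

/-- Color `i` is used on some `r`-edge. -/
def hUsed (r : ℕ) {n k : ℕ} (c : Finset (Fin n) → Fin k) (i : Fin k) : Prop :=
  ∃ e : Finset (Fin n), e.card = r ∧ c e = i

/-- The minimum, over used colors, of the number of components of the
corresponding color class. -/
noncomputable def hMinComps (r : ℕ) {n k : ℕ} (c : Finset (Fin n) → Fin k) : ℕ :=
  sInf ((fun i => numEdgeComps (hColorClass r c i)) '' {i | hUsed r c i})

/-- `f_k(K_n^r)`: the maximum over `k`-edge-colorings of `K_n^r` of the minimum,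
over used colors, of the number of components of the color class. -/
noncomputable def fHyper (n r k : ℕ) : ℕ :=
  sSup (Set.range fun c : Finset (Fin n) → Fin k => hMinComps r c)


lemma cvx1 (r a : ℕ) (hr : 1 ≤ r) (ha : r ≤ a) :
    ∀ m, a.choose r + (r + m).choose r ≤ (a + m).choose r + 1 := by
  obtain ⟨p, rfl⟩ : ∃ p, r = p + 1 := ⟨r - 1, by omega⟩
  intro m
  induction m with
  | zero => simp
  | succ m ih =>
    have h1 : (p + 1 + (m + 1)).choose (p + 1)
        = (p + 1 + m).choose p + (p + 1 + m).choose (p + 1) := by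
      rw [show p + 1 + (m + 1) = (p + 1 + m) + 1 by omega, Nat.choose_succ_succ]
    have h2 : (a + (m + 1)).choose (p + 1)
        = (a + m).choose p + (a + m).choose (p + 1) := by
      rw [show a + (m + 1) = (a + m) + 1 by omega, Nat.choose_succ_succ]
    have h3 : (p + 1 + m).choose p ≤ (a + m).choose p :=
      Nat.choose_le_choose p (by omega)
    omega

lemma cvx2 (r a b : ℕ) (hr : 1 ≤ r) (ha : r ≤ a) (hb : r ≤ b) :
    a.choose r + b.choose r ≤ (a + b - r).choose r + 1 := by
  have := cvx1 r a hr ha (b - r)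
  rw [show r + (b - r) = b by omega] at this
  rw [show a + b - r = a + (b - r) by omega]
  exact this

lemma cvxsum (r : ℕ) (hr : 1 ≤ r) {α : Type*} (T : Finset α) (s : α → ℕ)
    (hT : T.Nonempty) (hs : ∀ C ∈ T, r ≤ s C) :
    ∑ C ∈ T, (s C).choose r ≤
      ((∑ C ∈ T, s C) - r * (T.card - 1)).choose r + (T.card - 1) := by
  induction hT using Finset.Nonempty.cons_induction with
  | singleton a => simp
  | cons a t h ht ih =>
    have hst : ∀ C ∈ t, r ≤ s C := fun C hC => hs C (Finset.mem_cons.2 (Or.inr hC))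
    have ih' := ih hst
    obtain ⟨q1, hq1⟩ : ∃ q1, t.card = q1 + 1 :=
      ⟨t.card - 1, by have := Finset.card_pos.2 ht; omega⟩
    rw [hq1] at ih'
    simp only [Nat.add_sub_cancel] at ih'
    rw [Finset.sum_cons, Finset.sum_cons, Finset.card_cons, hq1]
    simp only [Nat.add_sub_cancel]
    have hsum : r * (q1 + 1) ≤ ∑ C ∈ t, s C := by
      calc r * (q1 + 1) = ∑ _C ∈ t, r := by
            rw [Finset.sum_const, smul_eq_mul, hq1, mul_comm]
        _ ≤ ∑ C ∈ t, s C := Finset.sum_le_sum hst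
    have hm1 : r * (q1 + 1) = r * q1 + r := by ring
    have hb : r ≤ (∑ C ∈ t, s C) - r * q1 := by omega
    have ha : r ≤ s a := hs a (Finset.mem_cons_self ..)
    have key := cvx2 r (s a) ((∑ C ∈ t, s C) - r * q1) hr ha hb
    have e1 : s a + ((∑ C ∈ t, s C) - r * q1) - r = s a + (∑ C ∈ t, s C) - r * (q1 + 1) := by
      omega
    rw [e1] at key
    omega

open Finset in
lemma count_le (r : ℕ) {n k : ℕ} (hr : 2 ≤ r) (c : Finset (Fin n) → Fin k) (i : Fin k) :
    {e : Finset (Fin n) | e.card = r ∧ c e = i}.ncard ≤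
      (n - r * (numEdgeComps (hColorClass r c i) - 1)).choose r
        + (numEdgeComps (hColorClass r c i) - 1) := by
  classical
  set G := hColorClass r c i with hG
  haveI : Fintype G.ConnectedComponent := Fintype.ofFinite _
  set supp : G.ConnectedComponent → Finset (Fin n) :=
    fun C => univ.filter (fun v => G.connectedComponentMk v = C) with hsupp
  set T : Finset G.ConnectedComponent :=
    univ.filter (fun C => ∃ u v, G.Adj u v ∧ G.connectedComponentMk u = C) with hTdef
  have hT : numEdgeComps G = T.card := by
    rw [numEdgeComps, Nat.card_eq_fintype_card, Fintype.card_subtype]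
  set E : Finset (Finset (Fin n)) := univ.filter (fun e => e.card = r ∧ c e = i) with hEdef
  have hE : {e : Finset (Fin n) | e.card = r ∧ c e = i}.ncard = E.card := by
    have : {e : Finset (Fin n) | e.card = r ∧ c e = i} = ↑E := by
      ext e; simp [hEdef]
    rw [this, Set.ncard_coe_finset]
  -- all vertices of an edge of color i are in one component
  have hreach : ∀ e ∈ E, ∀ u ∈ e, ∀ v ∈ e,
      G.connectedComponentMk u = G.connectedComponentMk v := by
    intro e he u hu v hv
    rcases eq_or_ne u v with rfl | huv
    · rfl
    · simp only [hEdef, mem_filter] at he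
      exact SimpleGraph.ConnectedComponent.sound ⟨SimpleGraph.Walk.cons
        (show G.Adj u v from ⟨huv, e, he.2.1, he.2.2, hu, hv⟩) SimpleGraph.Walk.nil⟩
  have hne : ∀ e ∈ E, e.Nonempty := by
    intro e he
    simp only [hEdef, mem_filter] at he
    exact Finset.card_pos.1 (by omega)
  -- the component of an edge
  have hcomp : ∀ e ∈ E, ∃ C ∈ T, e ⊆ supp C := by
    intro e he
    obtain ⟨u₀, hu₀⟩ := hne e he
    refine ⟨G.connectedComponentMk u₀, ?_, ?_⟩
    · simp only [hTdef, mem_filter, mem_univ, true_and]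
      have h2 : 1 < e.card := by
        simp only [hEdef, mem_filter] at he; omega
      obtain ⟨u, hu, v, hv, huv⟩ := Finset.one_lt_card.1 h2
      have he' := he
      simp only [hEdef, mem_filter] at he'
      exact ⟨u, v, ⟨huv, e, he'.2.1, he'.2.2, hu, hv⟩, hreach e he u hu u₀ hu₀⟩
    · intro v hv
      simp only [hsupp, mem_filter, mem_univ, true_and]
      exact hreach e he v hv u₀ hu₀
  have hsub : E ⊆ T.biUnion (fun C => (supp C).powersetCard r) := by
    intro e he
    obtain ⟨C, hC, hCe⟩ := hcomp e he
    refine Finset.mem_biUnion.2 ⟨C, hC, Finset.mem_powersetCard.2 ⟨hCe, ?_⟩⟩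
    simp only [hEdef, mem_filter] at he
    exact he.2.1
  have hcard1 : E.card ≤ ∑ C ∈ T, ((supp C).card).choose r := by
    calc E.card ≤ (T.biUnion (fun C => (supp C).powersetCard r)).card :=
          Finset.card_le_card hsub
      _ ≤ ∑ C ∈ T, ((supp C).powersetCard r).card := Finset.card_biUnion_le
      _ = ∑ C ∈ T, ((supp C).card).choose r := by
          simp [Finset.card_powersetCard]
  have hsuppr : ∀ C ∈ T, r ≤ (supp C).card := by
    intro C hC
    simp only [hTdef, mem_filter, mem_univ, true_and] at hC
    obtain ⟨u, v, huv, hu⟩ := hC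
    obtain ⟨hne', e, he1, he2, hue, hve⟩ := huv
    have heE : e ∈ E := by simp [hEdef, he1, he2]
    have : e ⊆ supp C := by
      intro w hw
      simp only [hsupp, mem_filter, mem_univ, true_and]
      rw [← hu]
      exact hreach e heE w hw u hue
    calc r = e.card := he1.symm
      _ ≤ (supp C).card := Finset.card_le_card this
  have hdisj : ∀ x ∈ T, ∀ y ∈ T, x ≠ y → Disjoint (supp x) (supp y) := by
    intro x _ y _ hxy
    rw [Finset.disjoint_left]
    intro v hvx hvy
    simp only [hsupp, mem_filter, mem_univ, true_and] at hvx hvy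
    exact hxy (hvx ▸ hvy ▸ rfl)
  have hsumn : ∑ C ∈ T, (supp C).card ≤ n := by
    calc ∑ C ∈ T, (supp C).card = (T.biUnion supp).card := (Finset.card_biUnion hdisj).symm
      _ ≤ (univ : Finset (Fin n)).card := Finset.card_le_card (Finset.subset_univ _)
      _ = n := by simp
  rcases Finset.eq_empty_or_nonempty T with hTe | hTne
  · have : E = ∅ := by
      rw [Finset.eq_empty_iff_forall_notMem]
      intro e he
      obtain ⟨C, hC, _⟩ := hcomp e he
      rw [hTe] at hC
      exact absurd hC (Finset.notMem_empty C)
    rw [hE, this]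
    simp
  · have h0 := cvxsum r (by omega) T (fun C => (supp C).card) hTne hsuppr
    have h1 : ∑ C ∈ T, ((supp C).card).choose r ≤
        ((∑ C ∈ T, (supp C).card) - r * (T.card - 1)).choose r + (T.card - 1) := h0
    clear h0
    have h2 : ((∑ C ∈ T, (supp C).card) - r * (T.card - 1)).choose r ≤
        (n - r * (T.card - 1)).choose r :=
      Nat.choose_le_choose r (by omega)
    rw [hE, hT]
    omega


open Filter Real

lemma numEdgeComps_le {n : ℕ} (G : SimpleGraph (Fin n)) : numEdgeComps G ≤ n := by
  rw [numEdgeComps]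
  calc Nat.card {C : G.ConnectedComponent //
        ∃ u v : Fin n, G.Adj u v ∧ G.connectedComponentMk u = C}
      ≤ Nat.card G.ConnectedComponent :=
        Nat.card_le_card_of_injective Subtype.val Subtype.val_injective
    _ ≤ Nat.card (Fin n) :=
        Nat.card_le_card_of_surjective G.connectedComponentMk
          (fun C => C.exists_rep)
    _ = n := by simp

lemma hMinComps_le {r n k : ℕ} (c : Finset (Fin n) → Fin k) : hMinComps r c ≤ n := by
  rw [hMinComps]
  rcases Set.eq_empty_or_nonempty
      ((fun i => numEdgeComps (hColorClass r c i)) '' {i | hUsed r c i}) with h | h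
  · rw [h, Nat.sInf_empty]; exact Nat.zero_le n
  · obtain ⟨x, hx⟩ := h
    obtain ⟨i, hiu, rfl⟩ := hx
    exact le_trans (Nat.sInf_le ⟨i, hiu, rfl⟩) (numEdgeComps_le _)

open scoped Classical in
lemma pigeon (r n k : ℕ) (hk0 : 0 < k) (c : Finset (Fin n) → Fin k) :
    ∃ i : Fin k, n.choose r ≤
      k * (Finset.univ.filter (fun e : Finset (Fin n) => e.card = r ∧ c e = i)).card := by
  haveI : Nonempty (Fin k) := ⟨⟨0, hk0⟩⟩
  have hsum : ∑ i : Fin k,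
      (Finset.univ.filter (fun e : Finset (Fin n) => e.card = r ∧ c e = i)).card
      = n.choose r := by
    have h1 : ((Finset.univ : Finset (Fin n)).powersetCard r).card
        = ∑ i : Fin k, (((Finset.univ : Finset (Fin n)).powersetCard r).filter
            (fun e => c e = i)).card :=
      Finset.card_eq_sum_card_fiberwise (fun e _ => Finset.mem_univ (c e))
    have h2 : ∀ i : Fin k, (((Finset.univ : Finset (Fin n)).powersetCard r).filter
        (fun e => c e = i))
        = Finset.univ.filter (fun e : Finset (Fin n) => e.card = r ∧ c e = i) := by
      intro i
      ext e
      simp [Finset.mem_powersetCard_univ, and_comm]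
    have h3 : ((Finset.univ : Finset (Fin n)).powersetCard r).card = n.choose r := by
      rw [Finset.card_powersetCard]
      simp
    rw [← h3, h1]
    exact Finset.sum_congr rfl (fun i _ => by rw [h2 i])
  by_contra h
  push_neg at h
  have h1 : ∑ i : Fin k,
      k * (Finset.univ.filter (fun e : Finset (Fin n) => e.card = r ∧ c e = i)).card
      < ∑ _i : Fin k, n.choose r :=
    Finset.sum_lt_sum_of_nonempty Finset.univ_nonempty (fun i _ => h i)
  rw [← Finset.mul_sum, hsum, Finset.sum_const, Finset.card_univ, Fintype.card_fin,
    smul_eq_mul] at h1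
  omega

open scoped Classical in
lemma ncard_filter_eq (r : ℕ) {n k : ℕ} (c : Finset (Fin n) → Fin k) (i : Fin k) :
    {e : Finset (Fin n) | e.card = r ∧ c e = i}.ncard
      = (Finset.univ.filter (fun e : Finset (Fin n) => e.card = r ∧ c e = i)).card := by
  have : {e : Finset (Fin n) | e.card = r ∧ c e = i}
      = ↑(Finset.univ.filter (fun e : Finset (Fin n) => e.card = r ∧ c e = i)) := by
    ext e; simp
  rw [this, Set.ncard_coe_finset]

set_option maxHeartbeats 1000000 in
lemma analytic (r k : ℕ) (hr : 2 ≤ r) (hk : r + 1 ≤ k) (ε : ℝ) (hε : 0 < ε)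
    (hε2 : ε * (1 - ((k:ℝ) ^ ((1:ℝ)/(r:ℝ)))⁻¹) ≤ ((k:ℝ) ^ ((1:ℝ)/(r:ℝ)))⁻¹ / 2) :
    ∃ N : ℕ, ∀ n : ℕ, N ≤ n → ∀ t : ℕ, (t : ℝ) ≤ (n : ℝ) →
      ((n.choose r : ℝ) / (k : ℝ) ≤ (((n - r * (t - 1)).choose r : ℝ) + ((t - 1 : ℕ) : ℝ))) →
      (t : ℝ) ≤ (n : ℝ) * (1 / (r : ℝ) - 1 / ((r : ℝ) * (k : ℝ) ^ ((1 : ℝ) / (r : ℝ)))) * (1 + ε) := by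
  have hr0 : (0:ℝ) < r := by positivity
  have hk1 : (1:ℝ) < k := by exact_mod_cast by omega
  obtain ⟨K, hKdef⟩ : ∃ K, K = (k:ℝ) ^ ((1:ℝ)/(r:ℝ)) := ⟨_, rfl⟩
  rw [← hKdef] at hε2 ⊢
  have hK : (1:ℝ) < K := by
    rw [hKdef]
    exact Real.one_lt_rpow_iff_of_pos (by linarith) |>.2 (Or.inl ⟨hk1, by positivity⟩)
  have hK0 : (0:ℝ) < K := by linarith
  have hKr : K ^ r = (k:ℝ) := by
    rw [hKdef, one_div]
    exact Real.rpow_inv_natCast_pow (by positivity) (by omega)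
  obtain ⟨θ, hθdef⟩ : ∃ θ, θ = K⁻¹ := ⟨_, rfl⟩
  rw [← hθdef] at hε2
  have hθ0 : 0 < θ := by rw [hθdef]; positivity
  have hθ1 : θ < 1 := by rw [hθdef]; exact inv_lt_one_of_one_lt₀ hK
  have h1θ : 0 < 1 - θ := by linarith
  have hθr : θ ^ r = (k:ℝ)⁻¹ := by rw [hθdef, inv_pow, hKr]
  obtain ⟨δ, hδdef⟩ : ∃ δ, δ = θ - ε * (1 - θ) := ⟨_, rfl⟩
  have hδθ : δ < θ := by
    have : 0 < ε * (1 - θ) := mul_pos hε h1θ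
    rw [hδdef]; linarith
  have hδ0 : 0 < δ := by rw [hδdef]; linarith
  obtain ⟨c0, hc0def⟩ : ∃ c0, c0 = (1 - θ) / r := ⟨_, rfl⟩
  have hc0 : 1 / (r : ℝ) - 1 / ((r : ℝ) * K) = c0 := by
    rw [hc0def, hθdef]
    field_simp
  have hc0pos : 0 < c0 := by rw [hc0def]; positivity
  have hrc0 : (r:ℝ) * c0 = 1 - θ := by rw [hc0def]; field_simp
  have hfact : (0:ℝ) < (r.factorial : ℝ) := by positivity
  have hk0 : (0:ℝ) < k := by linarith
  -- tendsto facts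
  have h1n : Tendsto (fun n : ℕ => (1:ℝ) / n) atTop (nhds 0) :=
    tendsto_const_div_atTop_nhds_zero_nat 1
  have hrn : Tendsto (fun n : ℕ => (r:ℝ) / n) atTop (nhds 0) :=
    tendsto_const_div_atTop_nhds_zero_nat (r:ℝ)
  have hr1n : Tendsto (fun n : ℕ => ((r:ℝ) - 1) / n) atTop (nhds 0) :=
    tendsto_const_div_atTop_nhds_zero_nat ((r:ℝ) - 1)
  have hf : Tendsto (fun n : ℕ => ((δ + (r:ℝ)/n) ^ r) / r.factorial + (1/(n:ℝ))^(r-1))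
      atTop (nhds (δ ^ r / r.factorial)) := by
    have t1 : Tendsto (fun n : ℕ => ((δ + (r:ℝ)/n) ^ r) / r.factorial) atTop
        (nhds (δ ^ r / r.factorial)) := by
      have := (((tendsto_const_nhds (x := δ)).add hrn).pow r).div_const (r.factorial : ℝ)
      simpa using this
    have t2 : Tendsto (fun n : ℕ => (1/(n:ℝ))^(r-1)) atTop (nhds 0) := by
      have := h1n.pow (r-1)
      rwa [zero_pow (by omega)] at this
    simpa using t1.add t2
  have hg : Tendsto (fun n : ℕ => ((1 - ((r:ℝ) - 1)/n) ^ r) / ((k:ℝ) * r.factorial))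
      atTop (nhds (1 / ((k:ℝ) * r.factorial))) := by
    have t1 : Tendsto (fun n : ℕ => (1 - ((r:ℝ) - 1)/n) ^ r) atTop (nhds 1) := by
      have := ((tendsto_const_nhds (x := (1:ℝ))).sub hr1n).pow r
      simpa using this
    simpa using t1.div_const ((k:ℝ) * r.factorial)
  have hab : δ ^ r / r.factorial < 1 / ((k:ℝ) * r.factorial) := by
    have h1 : δ ^ r < θ ^ r := pow_lt_pow_left₀ hδθ (le_of_lt hδ0) (by omega)
    rw [hθr] at h1
    have h2 := mul_lt_mul_of_pos_right h1 (show (0:ℝ) < (k:ℝ) * r.factorial by positivity)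
    have h3 : (k:ℝ)⁻¹ * ((k:ℝ) * r.factorial) = r.factorial := by field_simp
    rw [h3] at h2
    rw [div_lt_div_iff₀ hfact (by positivity)]
    linarith
  have hev := hf.eventually_lt hg hab
  rw [eventually_atTop] at hev
  obtain ⟨N₀, hN₀⟩ := hev
  refine ⟨max (max N₀ 1) r, fun n hn t htn hyp => ?_⟩
  have hn1 : 1 ≤ n := le_trans (le_trans (le_max_right N₀ 1) (le_max_left _ r)) hn
  have hnr : r ≤ n := le_trans (le_max_right _ r) hn
  have hnN : N₀ ≤ n := le_trans (le_trans (le_max_left N₀ 1) (le_max_left _ r)) hn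
  have hnpos : (0:ℝ) < n := by exact_mod_cast hn1
  rw [hc0]
  by_contra hcon
  push_neg at hcon
  have hrhs0 : (0:ℝ) ≤ (n:ℝ) * c0 * (1 + ε) := by positivity
  have ht1 : 1 ≤ t := by
    by_contra h
    push_neg at h
    interval_cases t
    simp only [Nat.cast_zero] at hcon
    linarith
  have hscast : ((t - 1 : ℕ) : ℝ) = (t:ℝ) - 1 := by
    push_cast [Nat.cast_sub ht1]
    ring
  obtain ⟨s, hsdef⟩ : ∃ s, s = t - 1 := ⟨_, rfl⟩
  obtain ⟨m, hmdef⟩ : ∃ m, m = n - r * s := ⟨_, rfl⟩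
  rw [← hsdef, ← hmdef] at hyp
  have hscast' : (s:ℝ) = (t:ℝ) - 1 := by rw [hsdef]; exact hscast
  have hmle : (m:ℝ) ≤ δ * n + r := by
    rcases le_or_gt (r * s) n with h | h
    · have hm : (m:ℝ) = (n:ℝ) - (r:ℝ) * s := by
        rw [hmdef]
        push_cast [Nat.cast_sub h]
        ring
      have h2 : (r:ℝ) * (t:ℝ) > (r:ℝ) * ((n:ℝ) * c0 * (1+ε)) :=
        mul_lt_mul_of_pos_left hcon (by positivity)
      have h3 : (r:ℝ) * ((n:ℝ) * c0 * (1+ε)) = (n:ℝ) * ((1-θ) * (1+ε)) := by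
        rw [← hrc0]; ring
      have h4 : (n:ℝ) * δ = (n:ℝ) - (n:ℝ) * ((1-θ)*(1+ε)) := by
        rw [hδdef]; ring
      rw [hm, hscast']
      nlinarith
    · have : m = 0 := by omega
      rw [this]
      simp
      positivity
  have hm0 : (0:ℝ) ≤ (m:ℝ) := by positivity
  have hch1 : (m.choose r : ℝ) ≤ (m:ℝ)^r / r.factorial := by
    have h := Nat.descFactorial_le_pow m r
    rw [Nat.descFactorial_eq_factorial_mul_choose] at h
    have h' : ((r.factorial * m.choose r : ℕ) : ℝ) ≤ ((m^r : ℕ) : ℝ) := by exact_mod_cast h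
    push_cast at h'
    rw [le_div_iff₀ hfact]
    linarith
  have hch2 : ((n:ℝ) - r + 1)^r / r.factorial ≤ (n.choose r : ℝ) := by
    have h := Nat.pow_sub_le_descFactorial n r
    rw [Nat.descFactorial_eq_factorial_mul_choose] at h
    have hcast : ((n + 1 - r : ℕ) : ℝ) = (n:ℝ) - r + 1 := by
      push_cast [Nat.cast_sub (by omega : r ≤ n + 1)]
      ring
    have h' : (((n + 1 - r)^r : ℕ) : ℝ) ≤ ((r.factorial * n.choose r : ℕ) : ℝ) := by
      exact_mod_cast h
    push_cast at h'
    rw [hcast] at h'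
    rw [div_le_iff₀ hfact]
    linarith
  have hFG := hN₀ n hnN
  have hnne : (n:ℝ) ≠ 0 := ne_of_gt hnpos
  have hF : ((δ + (r:ℝ)/n) ^ r) / r.factorial + (1/(n:ℝ))^(r-1)
      = ((δ * n + r)^r / r.factorial + n) / (n:ℝ)^r := by
    have e1 : (δ + (r:ℝ)/n) = (δ * n + r)/n := by field_simp
    have e2 : ((n:ℝ))^(r-1) * (n:ℝ) = (n:ℝ)^r := by
      rw [← pow_succ]
      congr 1
      omega
    have e3 : (1/(n:ℝ))^(r-1) = (n:ℝ)/(n:ℝ)^r := by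
      rw [one_div, inv_pow, eq_div_iff (by positivity), ← e2, ← mul_assoc,
        inv_mul_cancel₀ (by positivity), one_mul]
    rw [e1, div_pow, add_div, div_right_comm, e3]
  have hG : ((1 - ((r:ℝ) - 1)/n) ^ r) / ((k:ℝ) * r.factorial)
      = (((n:ℝ) - r + 1)^r / ((k:ℝ) * r.factorial)) / (n:ℝ)^r := by
    have e1 : (1 - ((r:ℝ) - 1)/n) = ((n:ℝ) - r + 1)/n := by field_simp; ring
    rw [e1, div_pow, div_div, div_div]
    congr 1
    ring
  rw [hF, hG] at hFG
  have hnr0 : (0:ℝ) < (n:ℝ)^r := by positivity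
  have hFG' : (δ * n + r)^r / r.factorial + n < ((n:ℝ) - r + 1)^r / ((k:ℝ) * r.factorial) :=
    (div_lt_div_iff_of_pos_right hnr0).1 hFG
  have hsn : (s : ℝ) ≤ (n:ℝ) := by rw [hscast']; linarith
  have hmpow : (m:ℝ)^r ≤ (δ * n + r)^r := pow_le_pow_left₀ hm0 hmle r
  have hchain : (n.choose r : ℝ) / k ≤ (δ * n + r)^r / r.factorial + n := by
    have step : (m:ℝ)^r / r.factorial ≤ (δ * n + r)^r / r.factorial := by gcongr
    calc (n.choose r : ℝ) / k ≤ ((m.choose r : ℝ) + (s:ℝ)) := hyp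
      _ ≤ (m:ℝ)^r / r.factorial + n := by linarith
      _ ≤ (δ * n + r)^r / r.factorial + n := by linarith
  have hlast : ((n:ℝ) - r + 1)^r / ((k:ℝ) * r.factorial) ≤ (n.choose r : ℝ) / k := by
    rw [div_le_div_iff₀ (by positivity) hk0]
    have hh : ((n:ℝ) - r + 1)^r ≤ (r.factorial : ℝ) * n.choose r := by
      rw [div_le_iff₀ hfact] at hch2
      linarith
    nlinarith
  linarith


/-- The convexity bound on the number of components of a large color class,
and the resulting asymptotic upper bound
`f_k(K_n^r) ≤ n (1/r − 1/(r k^{1/r})) (1 + o(1))` for fixed `k ≥ r + 1`. -/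
theorem f_upper_bound (r k : ℕ) (hr : 2 ≤ r) (hk : r + 1 ≤ k) :
    (∀ n : ℕ, ∀ c : Finset (Fin n) → Fin k, ∀ i : Fin k,
      (n.choose r : ℝ) / (k : ℝ) ≤
        (Set.ncard {e : Finset (Fin n) | e.card = r ∧ c e = i} : ℝ) →
      (n.choose r : ℝ) / (k : ℝ) ≤
        (((n - r * (numEdgeComps (hColorClass r c i) - 1)).choose r : ℝ) +
          ((numEdgeComps (hColorClass r c i) - 1 : ℕ) : ℝ))) ∧
    (∀ ε : ℝ, 0 < ε → ∃ N : ℕ, ∀ n : ℕ, N ≤ n →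
      (fHyper n r k : ℝ) ≤
        (n : ℝ) * (1 / (r : ℝ) - 1 / ((r : ℝ) * (k : ℝ) ^ ((1 : ℝ) / (r : ℝ)))) *
          (1 + ε)) := by
  constructor
  · intro n c i h
    have hc := count_le r hr c i
    have hc' : ({e : Finset (Fin n) | e.card = r ∧ c e = i}.ncard : ℝ) ≤
        ((n - r * (numEdgeComps (hColorClass r c i) - 1)).choose r : ℝ) +
          ((numEdgeComps (hColorClass r c i) - 1 : ℕ) : ℝ) := by
      exact_mod_cast hc
    linarith
  · intro ε hε
    have hr0 : (0:ℝ) < r := by positivity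
    have hk1 : (1:ℝ) < k := by exact_mod_cast by omega
    have hk0 : 0 < k := by omega
    have hK : (1:ℝ) < (k:ℝ) ^ ((1:ℝ)/(r:ℝ)) :=
      Real.one_lt_rpow_iff_of_pos (by linarith) |>.2 (Or.inl ⟨hk1, by positivity⟩)
    have hK0 : (0:ℝ) < (k:ℝ) ^ ((1:ℝ)/(r:ℝ)) := by linarith
    have hθ0 : 0 < ((k:ℝ) ^ ((1:ℝ)/(r:ℝ)))⁻¹ := by positivity
    have hθ1 : ((k:ℝ) ^ ((1:ℝ)/(r:ℝ)))⁻¹ < 1 := inv_lt_one_of_one_lt₀ hK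
    set θ := ((k:ℝ) ^ ((1:ℝ)/(r:ℝ)))⁻¹ with hθdef
    have h1θ : 0 < 1 - θ := by linarith
    set ε' := min ε (θ / (2 * (1 - θ))) with hε'def
    have hε'0 : 0 < ε' := lt_min hε (by positivity)
    have hε'ε : ε' ≤ ε := min_le_left _ _
    have hε'2 : ε' * (1 - θ) ≤ θ / 2 := by
      have h1 : ε' ≤ θ / (2 * (1 - θ)) := min_le_right _ _
      have h2 : ε' * (1 - θ) ≤ (θ / (2 * (1 - θ))) * (1 - θ) :=
        mul_le_mul_of_nonneg_right h1 (le_of_lt h1θ)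
      have h3 : (θ / (2 * (1 - θ))) * (1 - θ) = θ / 2 := by field_simp
      linarith
    obtain ⟨N₀, hN₀⟩ := analytic r k hr hk ε' hε'0 hε'2
    refine ⟨max N₀ r, fun n hn => ?_⟩
    have hnr : r ≤ n := le_trans (le_max_right N₀ r) hn
    have hn' : N₀ ≤ n := le_trans (le_max_left N₀ r) hn
    -- fHyper is attained
    haveI : Nonempty (Fin k) := ⟨⟨0, hk0⟩⟩
    have hbdd : fHyper n r k ∈ Set.range (fun c : Finset (Fin n) → Fin k => hMinComps r c) := by
      apply Nat.sSup_mem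
      · exact ⟨hMinComps r (fun _ => Classical.arbitrary (Fin k)), ⟨_, rfl⟩⟩
      · exact ⟨n, by rintro x ⟨c, rfl⟩; exact hMinComps_le c⟩
    obtain ⟨c, hc⟩ := hbdd
    obtain ⟨i, hi⟩ := pigeon r n k hk0 c
    have hdens : (n.choose r : ℝ) / (k : ℝ) ≤
        ({e : Finset (Fin n) | e.card = r ∧ c e = i}.ncard : ℝ) := by
      rw [ncard_filter_eq r c i]
      rw [div_le_iff₀ (by positivity)]
      calc (n.choose r : ℝ) ≤
          ((k * (Finset.univ.filter
            (fun e : Finset (Fin n) => e.card = r ∧ c e = i)).card : ℕ) : ℝ) := by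
            exact_mod_cast hi
        _ = ((Finset.univ.filter
            (fun e : Finset (Fin n) => e.card = r ∧ c e = i)).card : ℝ) * k := by
            push_cast; ring
    have hcount := count_le r hr c i
    have hchain : (n.choose r : ℝ) / (k : ℝ) ≤
        (((n - r * (numEdgeComps (hColorClass r c i) - 1)).choose r : ℝ) +
          ((numEdgeComps (hColorClass r c i) - 1 : ℕ) : ℝ)) := by
      have : ({e : Finset (Fin n) | e.card = r ∧ c e = i}.ncard : ℝ) ≤
          ((n - r * (numEdgeComps (hColorClass r c i) - 1)).choose r : ℝ) +
            ((numEdgeComps (hColorClass r c i) - 1 : ℕ) : ℝ) := by exact_mod_cast hcount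
      linarith
    have htn : ((numEdgeComps (hColorClass r c i) : ℕ) : ℝ) ≤ (n : ℝ) := by
      exact_mod_cast numEdgeComps_le (hColorClass r c i)
    have hres := hN₀ n hn' (numEdgeComps (hColorClass r c i)) htn hchain
    have hminle : (hMinComps r c : ℝ) ≤ (numEdgeComps (hColorClass r c i) : ℝ) := by
      have husedi : hUsed r c i := by
        have hpos : 0 < (Finset.univ.filter
            (fun e : Finset (Fin n) => e.card = r ∧ c e = i)).card := by
          have hcp : 0 < n.choose r := Nat.choose_pos hnr
          rcases Nat.eq_zero_or_pos (Finset.univ.filter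
            (fun e : Finset (Fin n) => e.card = r ∧ c e = i)).card with h0 | h0
          · rw [h0, Nat.mul_zero] at hi
            omega
          · exact h0
        obtain ⟨e, he⟩ := Finset.card_pos.1 hpos
        classical
        rw [Finset.mem_filter] at he
        exact ⟨e, he.2.1, he.2.2⟩
      have : numEdgeComps (hColorClass r c i) ∈
          ((fun i => numEdgeComps (hColorClass r c i)) '' {i | hUsed r c i}) :=
        ⟨i, husedi, rfl⟩
      exact_mod_cast Nat.sInf_le this
    have hc0nonneg : 0 ≤ 1 / (r : ℝ) - 1 / ((r : ℝ) * (k:ℝ) ^ ((1:ℝ)/(r:ℝ))) := by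
      rw [sub_nonneg, div_le_div_iff₀ (by positivity) (by positivity)]
      nlinarith
    calc (fHyper n r k : ℝ) = (hMinComps r c : ℝ) := by exact_mod_cast hc.symm
      _ ≤ (numEdgeComps (hColorClass r c i) : ℝ) := hminle
      _ ≤ (n : ℝ) * (1 / (r : ℝ) - 1 / ((r : ℝ) * (k:ℝ) ^ ((1:ℝ)/(r:ℝ)))) * (1 + ε') := hres
      _ ≤ (n : ℝ) * (1 / (r : ℝ) - 1 / ((r : ℝ) * (k:ℝ) ^ ((1:ℝ)/(r:ℝ)))) * (1 + ε) := by
          apply mul_le_mul_of_nonneg_left (by linarith)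
          positivity
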